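/- Every n-vertex graph admitting an ℓ-page queue layout has at most 2ℓn − ℓ(2ℓ+1) edges (for n ≥ 2ℓ+1). -/

import Mathlib

private lemma sumA (ℓ : ℕ) : ∑ t ∈ Finset.range (2*ℓ - 1), (t+1)/2 = ℓ*ℓ - ℓ := by
  induction ℓ with
  | zero => simp
  | succ k ih =>
    rcases Nat.eq_zero_or_pos k with rfl | hk
    · norm_num
    · have h1 : 2*(k+1) - 1 = (2*k - 1) + 1 + 1 := by omega
      rw [h1, Finset.sum_range_succ, Finset.sum_range_succ, ih]
      have e1 : (k+1)*(k+1) = k*k + 2*k + 1 := by ring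
      rw [e1]
      have hkk : k ≤ k*k := Nat.le_mul_of_pos_left k hk
      omega

private lemma sumC (ℓ : ℕ) (hℓ : 1 ≤ ℓ) :
    ∑ j ∈ Finset.range (2*ℓ - 1), (ℓ - (j+1)/2) = ℓ*ℓ := by
  have hsub : ∑ j ∈ Finset.range (2*ℓ - 1), (ℓ - (j+1)/2)
      = ∑ j ∈ Finset.range (2*ℓ - 1), ℓ - ∑ j ∈ Finset.range (2*ℓ - 1), (j+1)/2 := by
    apply Finset.sum_tsub_distrib
    intro j hj
    rw [Finset.mem_range] at hj
    omega
  rw [hsub, sumA, Finset.sum_const, Finset.card_range, smul_eq_mul]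
  have e1 : (2*ℓ-1) * ℓ = 2*(ℓ*ℓ) - ℓ := by
    rw [Nat.sub_mul]; congr 1 <;> ring
  rw [e1]
  have hA : ℓ ≤ ℓ*ℓ := Nat.le_mul_of_pos_left ℓ hℓ
  omega

private lemma finalArith (X Y ℓ : ℕ) (hA : ℓ ≤ X) (hB : 2*X + ℓ ≤ Y) :
    X - ℓ + ((2*Y - 4*X) + X) ≤ 2*Y - (2*X + ℓ) := by omega

/-- Every `n`-vertex graph (`n ≥ 2ℓ+1`) admitting an ℓ-page queue layout has
at most `2ℓn − ℓ(2ℓ+1)` edges. -/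
theorem stmt_8 {V : Type*} [Fintype V] [LinearOrder V] [DecidableEq V]
    (G : SimpleGraph V) [DecidableRel G.Adj] (ℓ : ℕ)
    (hn : 2 * ℓ + 1 ≤ Fintype.card V)
    (σ : Sym2 V → Fin ℓ)
    (hqueue : ∀ a b c d : V, a < b → b < c → c < d →
      G.Adj a d → G.Adj b c → σ s(a, d) = σ s(b, c) → False) :
    G.edgeFinset.card ≤ 2 * ℓ * Fintype.card V - ℓ * (2 * ℓ + 1) := by
  classical
  rcases Nat.eq_zero_or_pos ℓ with rfl | hℓ
  · have hpos : 0 < Fintype.card V := by omega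
    have : Nonempty V := Fintype.card_pos_iff.mp hpos
    exact (σ s(this.some, this.some)).elim0
  set n := Fintype.card V with hndef
  -- rank function
  set r : V → ℕ := fun v => (Finset.univ.filter (fun u => u < v)).card with hrdef
  have hrmono : StrictMono r := by
    intro u v huv
    apply Finset.card_lt_card
    rw [Finset.ssubset_iff_of_subset]
    · exact ⟨u, by simp [huv], by simp⟩
    · intro x hx
      simp only [Finset.mem_filter, Finset.mem_univ, true_and] at hx ⊢
      exact hx.trans huv
  have hrlt : ∀ v, r v + 1 ≤ n := by
    intro v
    have h1 : (Finset.univ.filter (fun u => u < v)) ⊆ Finset.univ.erase v := by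
      intro x hx
      simp only [Finset.mem_filter, Finset.mem_univ, true_and] at hx
      exact Finset.mem_erase.mpr ⟨ne_of_lt hx, Finset.mem_univ x⟩
    have h2 := Finset.card_le_card h1
    rw [Finset.card_erase_of_mem (Finset.mem_univ v), Finset.card_univ] at h2
    have h3 : r v = (Finset.univ.filter (fun u => u < v)).card := rfl
    have h4 : 1 ≤ Fintype.card V := by omega
    omega
  -- basic Sym2 facts
  have hmk : ∀ e : Sym2 V, s(e.inf, e.sup) = e := by
    intro e
    induction e using Sym2.ind with
    | _ a b =>
      rcases le_total a b with h | h
      · rw [Sym2.inf_mk, Sym2.sup_mk, inf_eq_left.mpr h, sup_eq_right.mpr h]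
      · rw [Sym2.inf_mk, Sym2.sup_mk, inf_eq_right.mpr h, sup_eq_left.mpr h, Sym2.eq_swap]
  have hedge : ∀ e ∈ G.edgeFinset, G.Adj e.inf e.sup := by
    intro e he
    rw [SimpleGraph.mem_edgeFinset, ← hmk e, SimpleGraph.mem_edgeSet] at he
    exact he
  have hlt : ∀ e ∈ G.edgeFinset, e.inf < e.sup := by
    intro e he
    exact lt_of_le_of_ne (Sym2.inf_le_sup e) (hedge e he).ne
  -- fiberwise decomposition by sum of ranks
  have hcard : G.edgeFinset.card
      = ∑ t ∈ Finset.range (2*n - 2),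
          (G.edgeFinset.filter (fun e => r e.inf + r e.sup = t)).card := by
    apply Finset.card_eq_sum_card_fiberwise
    intro e he
    have h1 := hrmono (hlt e he)
    have h2 := hrlt e.sup
    show r e.inf + r e.sup ∈ Finset.range (2*n - 2)
    rw [Finset.mem_range]
    omega
  -- fiber determined by (inf, sum) or (sup, sum)
  have hdet : ∀ t, ∀ e1 ∈ G.edgeFinset.filter (fun e => r e.inf + r e.sup = t),
      ∀ e2 ∈ G.edgeFinset.filter (fun e => r e.inf + r e.sup = t),
      e1.inf = e2.inf → e1 = e2 := by
    intro t e1 h1 e2 h2 hinf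
    rw [Finset.mem_filter] at h1 h2
    have hsum : r e1.sup = r e2.sup := by
      have := h1.2; have := h2.2; rw [hinf] at *; omega
    have hsup : e1.sup = e2.sup := hrmono.injective hsum
    rw [← hmk e1, ← hmk e2, hinf, hsup]
  -- bound 1 : each fiber has at most ℓ edges (pages are distinct within a fiber)
  have bndℓ : ∀ t, (G.edgeFinset.filter (fun e => r e.inf + r e.sup = t)).card ≤ ℓ := by
    intro t
    have := Finset.card_le_card_of_injOn (f := σ)
      (s := G.edgeFinset.filter (fun e => r e.inf + r e.sup = t))
      (t := (Finset.univ : Finset (Fin ℓ)))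
      (fun a _ => Finset.mem_univ _) ?_
    · simpa using this
    · intro e1 h1 e2 h2 hσ
      simp only [Finset.coe_filter, Set.mem_setOf_eq] at h1 h2
      by_contra hne
      have ha1 : G.Adj e1.inf e1.sup := hedge e1 h1.1
      have ha2 : G.Adj e2.inf e2.sup := hedge e2 h2.1
      have hl1 : e1.inf < e1.sup := hlt e1 h1.1
      have hl2 : e2.inf < e2.sup := hlt e2 h2.1
      have hσ' : σ s(e1.inf, e1.sup) = σ s(e2.inf, e2.sup) := by
        rw [hmk, hmk]; exact hσ
      rcases lt_trichotomy e1.inf e2.inf with h | h | h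
      · -- e1.inf < e2.inf ⇒ e2.sup < e1.sup, nesting
        have hr1 : r e1.inf < r e2.inf := hrmono h
        have hr2 : r e2.sup < r e1.sup := by
          have := h1.2; have := h2.2; omega
        have hs : e2.sup < e1.sup := by
          by_contra hc
          push_neg at hc
          exact absurd (hrmono.le_iff_le.mpr hc) (by omega)
        exact hqueue e1.inf e2.inf e2.sup e1.sup h hl2 hs ha1 ha2 hσ'
      · exact hne (hdet t e1 (Finset.mem_filter.mpr h1) e2 (Finset.mem_filter.mpr h2) h)
      · have hr1 : r e2.inf < r e1.inf := hrmono h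
        have hr2 : r e1.sup < r e2.sup := by
          have := h1.2; have := h2.2; omega
        have hs : e1.sup < e2.sup := by
          by_contra hc
          push_neg at hc
          exact absurd (hrmono.le_iff_le.mpr hc) (by omega)
        exact hqueue e2.inf e1.inf e1.sup e2.sup h hl1 hs ha2 ha1 hσ'.symm
  -- bound 2 : fiber t has at most (t+1)/2 edges (left endpoint rank determines)
  have bndlow : ∀ t, (G.edgeFinset.filter (fun e => r e.inf + r e.sup = t)).card
      ≤ (t+1)/2 := by
    intro t
    have := Finset.card_le_card_of_injOn (f := fun e => r e.inf)
      (s := G.edgeFinset.filter (fun e => r e.inf + r e.sup = t))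
      (t := Finset.range ((t+1)/2)) ?_ ?_
    · simpa using this
    · intro e he
      rw [Finset.mem_coe, Finset.mem_filter] at he
      obtain ⟨he1, he2⟩ := he
      have h1 := hrmono (hlt e he1)
      show r e.inf ∈ Finset.range ((t+1)/2)
      rw [Finset.mem_range]
      omega
    · intro e1 h1 e2 h2 hre
      simp only [Finset.coe_filter, Set.mem_setOf_eq] at h1 h2
      exact hdet t e1 (Finset.mem_filter.mpr h1) e2 (Finset.mem_filter.mpr h2)
        (hrmono.injective hre)
  -- bound 3 : fiber t has at most n - 1 - t/2 edges (right endpoint rank determines)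
  have bndhigh : ∀ t, (G.edgeFinset.filter (fun e => r e.inf + r e.sup = t)).card
      ≤ n - 1 - t/2 := by
    intro t
    have := Finset.card_le_card_of_injOn (f := fun e => r e.sup)
      (s := G.edgeFinset.filter (fun e => r e.inf + r e.sup = t))
      (t := Finset.Ico (t/2 + 1) n) ?_ ?_
    · rw [Nat.card_Ico] at this
      omega
    · intro e he
      rw [Finset.mem_coe, Finset.mem_filter] at he
      obtain ⟨he1, he2⟩ := he
      have h1 := hrmono (hlt e he1)
      have h2 := hrlt e.sup
      show r e.sup ∈ Finset.Ico (t/2 + 1) n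
      rw [Finset.mem_Ico]
      omega
    · intro e1 h1 e2 h2 hre
      simp only [Finset.coe_filter, Set.mem_setOf_eq] at h1 h2
      have hre' : r e1.sup = r e2.sup := hre
      have hinf : e1.inf = e2.inf := by
        apply hrmono.injective
        have := h1.2; have := h2.2
        omega
      exact hdet t e1 (Finset.mem_filter.mpr h1) e2 (Finset.mem_filter.mpr h2) hinf
  -- split the sum into three ranges
  rw [hcard, Finset.range_eq_Ico,
    ← Finset.sum_Ico_consecutive (fun t =>
        (G.edgeFinset.filter (fun e => r e.inf + r e.sup = t)).card)
      (Nat.zero_le (2*ℓ - 1)) (by omega : 2*ℓ - 1 ≤ 2*n - 2),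
    ← Finset.sum_Ico_consecutive (fun t =>
        (G.edgeFinset.filter (fun e => r e.inf + r e.sup = t)).card)
      (by omega : 2*ℓ - 1 ≤ 2*n - 2*ℓ - 1) (by omega : 2*n - 2*ℓ - 1 ≤ 2*n - 2)]
  have S1 : ∑ t ∈ Finset.Ico 0 (2*ℓ - 1),
      (G.edgeFinset.filter (fun e => r e.inf + r e.sup = t)).card ≤ ℓ*ℓ - ℓ := by
    calc ∑ t ∈ Finset.Ico 0 (2*ℓ - 1),
        (G.edgeFinset.filter (fun e => r e.inf + r e.sup = t)).card
        ≤ ∑ t ∈ Finset.Ico 0 (2*ℓ - 1), (t+1)/2 :=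
          Finset.sum_le_sum (fun t _ => bndlow t)
      _ = ℓ*ℓ - ℓ := by rw [← Finset.range_eq_Ico, sumA]
  have S2 : ∑ t ∈ Finset.Ico (2*ℓ - 1) (2*n - 2*ℓ - 1),
      (G.edgeFinset.filter (fun e => r e.inf + r e.sup = t)).card
      ≤ (2*n - 4*ℓ) * ℓ := by
    calc ∑ t ∈ Finset.Ico (2*ℓ - 1) (2*n - 2*ℓ - 1),
        (G.edgeFinset.filter (fun e => r e.inf + r e.sup = t)).card
        ≤ ∑ _t ∈ Finset.Ico (2*ℓ - 1) (2*n - 2*ℓ - 1), ℓ :=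
          Finset.sum_le_sum (fun t _ => bndℓ t)
      _ = (2*n - 4*ℓ) * ℓ := by
          rw [Finset.sum_const, Nat.card_Ico, smul_eq_mul]
          congr 1
          omega
  have S3 : ∑ t ∈ Finset.Ico (2*n - 2*ℓ - 1) (2*n - 2),
      (G.edgeFinset.filter (fun e => r e.inf + r e.sup = t)).card ≤ ℓ*ℓ := by
    calc ∑ t ∈ Finset.Ico (2*n - 2*ℓ - 1) (2*n - 2),
        (G.edgeFinset.filter (fun e => r e.inf + r e.sup = t)).card
        ≤ ∑ t ∈ Finset.Ico (2*n - 2*ℓ - 1) (2*n - 2), (n - 1 - t/2) :=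
          Finset.sum_le_sum (fun t _ => bndhigh t)
      _ = ∑ j ∈ Finset.range (2*n - 2 - (2*n - 2*ℓ - 1)), (n - 1 - (2*n - 2*ℓ - 1 + j)/2) :=
          Finset.sum_Ico_eq_sum_range _ _ _
      _ = ∑ j ∈ Finset.range (2*ℓ - 1), (ℓ - (j+1)/2) := by
          have hr : 2*n - 2 - (2*n - 2*ℓ - 1) = 2*ℓ - 1 := by omega
          rw [hr]
          apply Finset.sum_congr rfl
          intro j hj
          rw [Finset.mem_range] at hj
          omega
      _ = ℓ*ℓ := sumC ℓ hℓ
  have hA : ℓ ≤ ℓ*ℓ := Nat.le_mul_of_pos_left ℓ hℓ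
  have hB : 2*(ℓ*ℓ) + ℓ ≤ ℓ*n := by
    calc 2*(ℓ*ℓ) + ℓ = ℓ * (2*ℓ + 1) := by ring
      _ ≤ ℓ * n := Nat.mul_le_mul_left ℓ hn
  calc (∑ t ∈ Finset.Ico 0 (2*ℓ - 1),
          (G.edgeFinset.filter (fun e => r e.inf + r e.sup = t)).card)
        + ((∑ t ∈ Finset.Ico (2*ℓ - 1) (2*n - 2*ℓ - 1),
          (G.edgeFinset.filter (fun e => r e.inf + r e.sup = t)).card)
        + (∑ t ∈ Finset.Ico (2*n - 2*ℓ - 1) (2*n - 2),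
          (G.edgeFinset.filter (fun e => r e.inf + r e.sup = t)).card))
      ≤ (ℓ*ℓ - ℓ) + ((2*n - 4*ℓ) * ℓ + ℓ*ℓ) := by
        exact Nat.add_le_add S1 (Nat.add_le_add S2 S3)
    _ ≤ 2 * ℓ * n - ℓ * (2*ℓ + 1) := by
        have e2 : (2*n - 4*ℓ) * ℓ = 2*(ℓ*n) - 4*(ℓ*ℓ) := by
          rw [Nat.sub_mul]; congr 1 <;> ring
        have e3 : 2 * ℓ * n = 2 * (ℓ*n) := by ring
        have e4 : ℓ * (2*ℓ + 1) = 2*(ℓ*ℓ) + ℓ := by ring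
        rw [e2, e3, e4]
        exact finalArith (ℓ*ℓ) (ℓ*n) ℓ hA hB
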